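/- For every u ∈ D*: (i) the function x ↦ u(x) − c_u·sign(x)·(x²+1)^{−1/2} is Lebesgue integrable over ℝ, so Γ₁u is well defined; (ii) |Γ₂u| = |c_u| ≤ ‖A*u‖ + ‖u‖ + ‖u‖·‖ψ‖·‖φ‖ (norms in L²(ℝ)); (iii) there is a constant C > 0, independent of u, such that |Γ₁u| ≤ C(‖A*u‖ + ‖u‖). Hence Γ₁ and Γ₂ are bounded with respect to the graph norm of A*. -/

import Mathlib

open MeasureTheory Filter

/-- The (paper-convention) `L²(ℝ)` inner product `⟨f,g⟩ = ∫ f · conj g`,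
linear in the first argument. -/
noncomputable def ip (f g : ℝ → ℂ) : ℂ :=
  ∫ x : ℝ, f x * (starRingEnd ℂ) (g x)

/-- The boundary operator `Γ₁`, evaluated on `g ∈ D*` with associated constant `c = c_g`:
`Γ₁ g = ∫_ℝ ( g(x) − c·sign(x)·(x²+1)^{−1/2} ) dx`. -/
noncomputable def Gam1 (g : ℝ → ℂ) (c : ℂ) : ℂ :=
  ∫ x : ℝ, (g x - c * ((Real.sign x : ℝ) : ℂ) * (((Real.sqrt (x ^ 2 + 1) : ℝ) : ℂ))⁻¹)

/-- The `L²(ℝ)` norm of a function. -/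
noncomputable def l2 (f : ℝ → ℂ) : ℝ := (eLpNorm f 2 (volume : Measure ℝ)).toReal


open Set

lemma meas_sign : Measurable Real.sign := by
  unfold Real.sign
  exact Measurable.ite measurableSet_Iio measurable_const
    (Measurable.ite measurableSet_Ioi measurable_const measurable_const)

noncomputable def sfn (x : ℝ) : ℂ :=
  ((Real.sign x : ℝ) : ℂ) * (((Real.sqrt (x ^ 2 + 1) : ℝ) : ℂ))⁻¹

lemma meas_sfn : Measurable sfn := by
  apply Measurable.mul
  · exact Complex.measurable_ofReal.comp meas_sign
  · exact (Complex.measurable_ofReal.comp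
      ((Real.continuous_sqrt.comp (by continuity)).measurable)).inv

lemma sqrt_ge_one (x : ℝ) : 1 ≤ Real.sqrt (x ^ 2 + 1) := by
  have : Real.sqrt 1 ≤ Real.sqrt (x ^ 2 + 1) := Real.sqrt_le_sqrt (by nlinarith [sq_nonneg x])
  simpa using this

lemma norm_sfn_le (x : ℝ) : ‖sfn x‖ ≤ 1 := by
  have h1 : |Real.sign x| ≤ 1 := by
    rcases Real.sign_apply_eq x with h | h | h <;> simp [h]
  have h2 := sqrt_ge_one x
  rw [sfn, norm_mul, norm_inv, Complex.norm_real, Complex.norm_real,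
    Real.norm_eq_abs, Real.norm_eq_abs, abs_of_nonneg (Real.sqrt_nonneg _)]
  calc |Real.sign x| * (Real.sqrt (x ^ 2 + 1))⁻¹ ≤ 1 * 1 := by
        apply mul_le_mul h1 _ (by positivity) zero_le_one
        rw [inv_le_one_iff₀]; right; exact h2
    _ = 1 := one_mul 1

lemma compl_Icc_eq : (Icc (-1:ℝ) 1)ᶜ = Iio (-1) ∪ Ioi 1 := by
  ext x
  simp only [mem_compl_iff, mem_Icc, not_and_or, not_le, mem_union, mem_Iio, mem_Ioi]

lemma int_inv_sq_Ioi : IntegrableOn (fun x : ℝ => (x ^ 2)⁻¹) (Ioi 1) := by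
  have h := integrableOn_Ioi_rpow_of_lt (a := (-2:ℝ)) (by norm_num) (c := 1) one_pos
  apply h.congr_fun (fun x hx => ?_) measurableSet_Ioi
  have hx0 : (0:ℝ) < x := lt_trans one_pos hx
  rw [Real.rpow_neg hx0.le, show ((2:ℝ)) = ((2:ℕ):ℝ) by norm_num, Real.rpow_natCast]

lemma int_inv_sq_T : IntegrableOn (fun x : ℝ => (x ^ 2)⁻¹) ((Icc (-1:ℝ) 1)ᶜ) := by
  rw [compl_Icc_eq, integrableOn_union]
  constructor
  · have h : IntegrableOn (fun x : ℝ => ((Ioi (1:ℝ)).indicator (fun y => (y ^ 2)⁻¹)) (-x)) (Iio (-1)) := by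
      have h2 : Integrable (fun x : ℝ => ((Ioi (1:ℝ)).indicator (fun y => (y ^ 2)⁻¹)) (-x)) := by
        exact (int_inv_sq_Ioi.integrable_indicator measurableSet_Ioi).comp_neg
      exact h2.integrableOn
    apply h.congr_fun (fun x hx => ?_) measurableSet_Iio
    rw [indicator_of_mem (by simpa using (by linarith [mem_Iio.mp hx] : (1:ℝ) < -x))]
    ring_nf
  · exact int_inv_sq_Ioi

lemma pos_case {x : ℝ} (hx : 1 ≤ x) :
    0 ≤ x⁻¹ - (Real.sqrt (x ^ 2 + 1))⁻¹ ∧ x⁻¹ - (Real.sqrt (x ^ 2 + 1))⁻¹ ≤ (x ^ 2)⁻¹ := by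
  set q := Real.sqrt (x ^ 2 + 1) with hq
  have hq2 : q ^ 2 = x ^ 2 + 1 := Real.sq_sqrt (by positivity)
  have hq1 : 1 ≤ q := sqrt_ge_one x
  have hx0 : (0:ℝ) < x := lt_of_lt_of_le one_pos hx
  have hq0 : (0:ℝ) < q := lt_of_lt_of_le one_pos hq1
  have hqx : x ≤ q := by nlinarith
  constructor
  · have : q⁻¹ ≤ x⁻¹ := by
      apply inv_anti₀ hx0 hqx
    linarith
  · have hqx1 : q ≤ x + 1 := by nlinarith
    have key : x * q ≤ q + x ^ 2 := by nlinarith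
    rw [sub_le_iff_le_add, inv_eq_one_div, inv_eq_one_div, inv_eq_one_div,
      div_add_div _ _ (by positivity) (by positivity),
      div_le_div_iff₀ (by positivity) (by positivity)]
    nlinarith [mul_le_mul_of_nonneg_left key hx0.le]

lemma rbound {x : ℝ} (hx : 1 ≤ |x|) :
    ‖((x:ℝ):ℂ)⁻¹ - sfn x‖ ≤ (x ^ 2)⁻¹ := by
  have hre : ((x:ℝ):ℂ)⁻¹ - sfn x
      = (((x⁻¹ - Real.sign x * (Real.sqrt (x ^ 2 + 1))⁻¹ : ℝ)) : ℂ) := by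
    rw [sfn]; push_cast; ring
  rw [hre, Complex.norm_real, Real.norm_eq_abs]
  rcases le_or_gt 1 x with h1 | h1
  · rw [Real.sign_of_pos (by linarith), one_mul,
      abs_of_nonneg (pos_case h1).1]
    exact (pos_case h1).2
  · have hneg : x ≤ -1 := by
      rcases abs_cases x with ⟨h, _⟩ | ⟨h, _⟩ <;> rw [h] at hx <;> linarith
    have hx0 : x < 0 := by linarith
    have hy : 1 ≤ -x := by linarith
    have hsq : (-x) ^ 2 = x ^ 2 := by ring
    have hp := pos_case hy
    rw [hsq] at hp
    rw [Real.sign_of_neg hx0]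
    have he : x⁻¹ - (-1) * (Real.sqrt (x ^ 2 + 1))⁻¹
        = -(((-x)⁻¹ - (Real.sqrt (x ^ 2 + 1))⁻¹)) := by
      rw [inv_neg]; ring
    rw [he, abs_neg, abs_of_nonneg hp.1]
    exact hp.2

lemma cs {μ : Measure ℝ} {f g : ℝ → ℂ} (hf : MemLp f 2 μ) (hg : MemLp g 2 μ) :
    ‖∫ x, f x * (starRingEnd ℂ) (g x) ∂μ‖
      ≤ (eLpNorm f 2 μ).toReal * (eLpNorm g 2 μ).toReal := by
  have key : (inner ℂ (hg.toLp g) (hf.toLp f) : ℂ)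
      = ∫ x, f x * (starRingEnd ℂ) (g x) ∂μ := by
    rw [MeasureTheory.L2.inner_def]
    apply integral_congr_ae
    filter_upwards [hg.coeFn_toLp, hf.coeFn_toLp] with x h1 h2
    rw [RCLike.inner_apply', h1, h2, mul_comm]
  calc ‖∫ x, f x * (starRingEnd ℂ) (g x) ∂μ‖
      = ‖(inner ℂ (hg.toLp g) (hf.toLp f) : ℂ)‖ := by rw [key]
    _ ≤ ‖hg.toLp g‖ * ‖hf.toLp f‖ := norm_inner_le_norm _ _
    _ = (eLpNorm f 2 μ).toReal * (eLpNorm g 2 μ).toReal := by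
        rw [Lp.norm_toLp, Lp.norm_toLp, mul_comm]

lemma mulL2 {μ : Measure ℝ} {f g : ℝ → ℂ} (hf : MemLp f 2 μ) (hg : MemLp g 2 μ) :
    Integrable (fun x => f x * g x) μ := by
  rw [← memLp_one_iff_integrable]
  have h := hf.smul (r := 1) (φ := g) hg (hpqr := ⟨by
    rw [inv_one]; exact ENNReal.inv_two_add_inv_two⟩)
  have : (fun x => f x * g x) = g • f := by funext x; simp [smul_eq_mul, mul_comm]
  rw [this]; exact h

lemma c_bound {u : ℝ → ℂ} {c : ℂ} (hu : MemLp u 2 (volume : Measure ℝ))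
    (hv : MemLp (fun x : ℝ => (x : ℂ) * u x - c) 2 (volume : Measure ℝ)) :
    ‖c‖ ≤ (eLpNorm (fun x : ℝ => (x : ℂ) * u x - c) 2 volume).toReal
      + (eLpNorm u 2 volume).toReal := by
  set v : ℝ → ℂ := fun x : ℝ => (x : ℂ) * u x - c with hvdef
  set ρ : Measure ℝ := volume.restrict (Icc (0:ℝ) 1) with hρ
  have hρu : ρ univ = 1 := by
    rw [hρ, Measure.restrict_apply_univ, Real.volume_Icc]
    norm_num
  have hρ0 : ρ ≠ 0 := by
    intro h
    rw [h] at hρu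
    simp at hρu
  have hconst : eLpNorm (fun _ : ℝ => c) 2 ρ = (‖c‖₊ : ENNReal) := by
    rw [eLpNorm_const c two_ne_zero hρ0, hρu, ENNReal.one_rpow, mul_one, enorm_eq_nnnorm]
  have hxu_meas : AEStronglyMeasurable (fun x : ℝ => (x : ℂ) * u x) ρ :=
    (Complex.continuous_ofReal.aestronglyMeasurable).mul (hu.restrict _).1
  have heq : (fun _ : ℝ => c) = (fun x : ℝ => (x : ℂ) * u x) - v := by
    funext x; simp [hvdef]
  have htri : eLpNorm (fun _ : ℝ => c) 2 ρ
      ≤ eLpNorm (fun x : ℝ => (x : ℂ) * u x) 2 ρ + eLpNorm v 2 ρ := by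
    rw [heq]
    exact eLpNorm_sub_le hxu_meas (hv.restrict _).1 one_le_two
  have hxu : eLpNorm (fun x : ℝ => (x : ℂ) * u x) 2 ρ ≤ eLpNorm u 2 ρ := by
    apply eLpNorm_mono_ae
    rw [hρ]
    refine (ae_restrict_iff' measurableSet_Icc).2 (Eventually.of_forall fun x hx => ?_)
    rw [norm_mul, Complex.norm_real, Real.norm_eq_abs]
    have : |x| ≤ 1 := abs_le.2 ⟨by linarith [hx.1], hx.2⟩
    calc |x| * ‖u x‖ ≤ 1 * ‖u x‖ := by
          exact mul_le_mul_of_nonneg_right this (norm_nonneg _)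
      _ = ‖u x‖ := one_mul _
  have hfinal : (‖c‖₊ : ENNReal) ≤ eLpNorm v 2 volume + eLpNorm u 2 volume := by
    rw [← hconst]
    calc eLpNorm (fun _ : ℝ => c) 2 ρ
        ≤ eLpNorm (fun x : ℝ => (x : ℂ) * u x) 2 ρ + eLpNorm v 2 ρ := htri
      _ ≤ eLpNorm u 2 ρ + eLpNorm v 2 ρ := add_le_add_left hxu _
      _ ≤ eLpNorm u 2 volume + eLpNorm v 2 volume :=
          add_le_add (eLpNorm_mono_measure _ Measure.restrict_le_self)
            (eLpNorm_mono_measure _ Measure.restrict_le_self)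
      _ = eLpNorm v 2 volume + eLpNorm u 2 volume := add_comm _ _
  have hne : eLpNorm v 2 volume + eLpNorm u 2 volume ≠ ⊤ :=
    ENNReal.add_ne_top.2 ⟨hv.2.ne, hu.2.ne⟩
  have := ENNReal.toReal_mono hne hfinal
  rwa [ENNReal.coe_toReal, coe_nnnorm, ENNReal.toReal_add hv.2.ne hu.2.ne] at this

lemma v_bound {u φ ψ : ℝ → ℂ} {k : ℂ}
    (hφ : MemLp φ 2 (volume : Measure ℝ)) (hu : MemLp u 2 (volume : Measure ℝ))
    {v : ℝ → ℂ} (hv : MemLp v 2 (volume : Measure ℝ))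
    (hk : ‖k‖ ≤ (eLpNorm u 2 volume).toReal * (eLpNorm ψ 2 volume).toReal) :
    (eLpNorm v 2 volume).toReal
      ≤ (eLpNorm (fun x : ℝ => v x + k * φ x) 2 volume).toReal
        + (eLpNorm u 2 volume).toReal * (eLpNorm ψ 2 volume).toReal
          * (eLpNorm φ 2 volume).toReal := by
  have hkφ : MemLp (fun x : ℝ => k * φ x) 2 (volume : Measure ℝ) := hφ.const_mul k
  have hw : MemLp (fun x : ℝ => v x + k * φ x) 2 (volume : Measure ℝ) := hv.add hkφ
  have hadd : hw.toLp (fun x : ℝ => v x + k * φ x) = hv.toLp v + hkφ.toLp _ :=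
    MemLp.toLp_add hv hkφ
  have hsmul : hkφ.toLp (fun x : ℝ => k * φ x) = k • hφ.toLp φ :=
    MemLp.toLp_const_smul k hφ
  have h1 : ‖hv.toLp v‖ ≤ ‖hw.toLp _‖ + ‖hkφ.toLp (fun x : ℝ => k * φ x)‖ := by
    have : hv.toLp v = hw.toLp _ - hkφ.toLp _ := by rw [hadd]; abel
    rw [this]
    exact norm_sub_le _ _
  rw [hsmul, norm_smul, Lp.norm_toLp, Lp.norm_toLp, Lp.norm_toLp] at h1
  calc (eLpNorm v 2 volume).toReal
      ≤ (eLpNorm (fun x : ℝ => v x + k * φ x) 2 volume).toReal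
        + ‖k‖ * (eLpNorm φ 2 volume).toReal := h1
    _ ≤ _ := by
        have := mul_le_mul_of_nonneg_right hk (ENNReal.toReal_nonneg
          (a := eLpNorm φ 2 volume))
        linarith

noncomputable def g0 (x : ℝ) : ℂ := ((x:ℝ):ℂ)⁻¹

lemma meas_g0 : Measurable g0 := by
  have : g0 = fun x : ℝ => ((x⁻¹ : ℝ) : ℂ) := by
    funext x; rw [g0, Complex.ofReal_inv]
  rw [this]
  exact Complex.measurable_ofReal.comp measurable_inv

instance finS : IsFiniteMeasure (volume.restrict (Icc (-1:ℝ) 1)) := by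
  constructor
  rw [Measure.restrict_apply_univ]
  exact measure_Icc_lt_top

lemma mem_T_abs {x : ℝ} (hx : x ∈ (Icc (-1:ℝ) 1)ᶜ) : 1 ≤ |x| := by
  rw [compl_Icc_eq] at hx
  rcases hx with h | h
  · rw [mem_Iio] at h; rw [abs_of_neg (by linarith)]; linarith
  · rw [mem_Ioi] at h; rw [abs_of_pos (by linarith)]; linarith

lemma hg0_mem : MemLp g0 2 (volume.restrict ((Icc (-1:ℝ) 1)ᶜ)) := by
  rw [memLp_two_iff_integrable_sq_norm meas_g0.aestronglyMeasurable]
  apply int_inv_sq_T.congr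
  refine Eventually.of_forall fun x => ?_
  show (x ^ 2)⁻¹ = ‖g0 x‖ ^ 2
  rw [show g0 x = ((x:ℝ):ℂ)⁻¹ from rfl, norm_inv, Complex.norm_real, Real.norm_eq_abs,
    inv_pow, sq_abs]

lemma intOn_T_r (c : ℂ) :
    Integrable (fun x : ℝ => c * (g0 x - sfn x)) (volume.restrict ((Icc (-1:ℝ) 1)ᶜ)) := by
  apply Integrable.const_mul
  apply Integrable.mono' (g := fun x : ℝ => (x ^ 2)⁻¹) int_inv_sq_T
    ((meas_g0.sub meas_sfn).aestronglyMeasurable)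
  refine (ae_restrict_iff' measurableSet_Icc.compl).2 (Eventually.of_forall fun x hx => ?_)
  exact rbound (mem_T_abs hx)

lemma intOn_S_sfn (c : ℂ) :
    Integrable (fun x : ℝ => c * sfn x) (volume.restrict (Icc (-1:ℝ) 1)) := by
  apply Integrable.mono' (g := fun _ : ℝ => ‖c‖) (integrable_const _)
    ((meas_sfn.const_mul c).aestronglyMeasurable)
  refine Eventually.of_forall fun x => ?_
  rw [norm_mul]
  calc ‖c‖ * ‖sfn x‖ ≤ ‖c‖ * 1 :=
        mul_le_mul_of_nonneg_left (norm_sfn_le x) (norm_nonneg _)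
    _ = ‖c‖ := mul_one _

lemma decomp_T {u : ℝ → ℂ} {c : ℂ} {x : ℝ} (hx : x ∈ (Icc (-1:ℝ) 1)ᶜ) :
    u x - c * sfn x = ((x : ℂ) * u x - c) * g0 x + c * (g0 x - sfn x) := by
  have hx0 : ((x:ℝ):ℂ) ≠ 0 := by
    simp only [ne_eq, Complex.ofReal_eq_zero]
    intro h
    have := mem_T_abs hx
    rw [h] at this; norm_num at this
  rw [show g0 x = ((x:ℝ):ℂ)⁻¹ from rfl]
  field_simp
  ring

lemma part_i {u : ℝ → ℂ} {c : ℂ} (hu : MemLp u 2 (volume : Measure ℝ))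
    (hv : MemLp (fun x : ℝ => (x : ℂ) * u x - c) 2 (volume : Measure ℝ)) :
    Integrable (fun x : ℝ => u x - c * sfn x) (volume : Measure ℝ) := by
  rw [← integrableOn_univ, ← union_compl_self (Icc (-1:ℝ) 1), integrableOn_union]
  constructor
  · exact ((hu.restrict _).integrable one_le_two).sub (intOn_S_sfn c)
  · have h1 : Integrable (fun x : ℝ => ((x : ℂ) * u x - c) * g0 x)
        (volume.restrict ((Icc (-1:ℝ) 1)ᶜ)) := mulL2 (hv.restrict _) hg0_mem
    apply (h1.add (intOn_T_r c)).congr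
    refine (ae_restrict_iff' measurableSet_Icc.compl).2 (Eventually.of_forall fun x hx => ?_)
    exact (decomp_T hx).symm

noncomputable def K1 : ℝ := (eLpNorm g0 2 (volume.restrict ((Icc (-1:ℝ) 1)ᶜ))).toReal
noncomputable def K2 : ℝ := ‖∫ x in (Icc (-1:ℝ) 1)ᶜ, (g0 x - sfn x)‖
noncomputable def K3 : ℝ :=
  (eLpNorm (fun _ : ℝ => (1:ℂ)) 2 (volume.restrict (Icc (-1:ℝ) 1))).toReal
noncomputable def K4 : ℝ := ‖∫ x in Icc (-1:ℝ) 1, sfn x‖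

lemma gam_bound {u : ℝ → ℂ} {c : ℂ} (hu : MemLp u 2 (volume : Measure ℝ))
    (hv : MemLp (fun x : ℝ => (x : ℂ) * u x - c) 2 (volume : Measure ℝ)) :
    ‖∫ x : ℝ, (u x - c * sfn x)‖
      ≤ K3 * (eLpNorm u 2 volume).toReal + K4 * ‖c‖
        + K1 * (eLpNorm (fun x : ℝ => (x : ℂ) * u x - c) 2 volume).toReal + K2 * ‖c‖ := by
  set S := Icc (-1:ℝ) 1 with hSdef
  set v : ℝ → ℂ := fun x : ℝ => (x : ℂ) * u x - c with hvdef
  have hint := part_i hu hv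
  have hsplit : (∫ x : ℝ, (u x - c * sfn x))
      = (∫ x in S, (u x - c * sfn x)) + (∫ x in Sᶜ, (u x - c * sfn x)) :=
    (integral_add_compl measurableSet_Icc hint).symm
  -- S part
  have huS : Integrable u (volume.restrict S) := (hu.restrict _).integrable one_le_two
  have hSsplit : (∫ x in S, (u x - c * sfn x))
      = (∫ x in S, u x) - c * (∫ x in S, sfn x) := by
    rw [integral_sub huS (intOn_S_sfn c), integral_const_mul]
  have hSu : ‖∫ x in S, u x‖ ≤ (eLpNorm u 2 volume).toReal * K3 := by
    have h1 := cs (hu.restrict S) (memLp_const (1:ℂ))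
    simp only [map_one, mul_one] at h1
    refine h1.trans ?_
    rw [K3]
    apply mul_le_mul_of_nonneg_right _ ENNReal.toReal_nonneg
    exact ENNReal.toReal_mono hu.2.ne (eLpNorm_mono_measure _ Measure.restrict_le_self)
  -- T part
  have hvT : Integrable (fun x : ℝ => v x * g0 x) (volume.restrict Sᶜ) :=
    mulL2 (hv.restrict _) hg0_mem
  have hTsplit : (∫ x in Sᶜ, (u x - c * sfn x))
      = (∫ x in Sᶜ, v x * g0 x) + c * (∫ x in Sᶜ, (g0 x - sfn x)) := by
    rw [← integral_const_mul, ← integral_add hvT (intOn_T_r c)]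
    apply integral_congr_ae
    refine (ae_restrict_iff' measurableSet_Icc.compl).2 (Eventually.of_forall fun x hx => ?_)
    exact decomp_T hx
  have hTv : ‖∫ x in Sᶜ, v x * g0 x‖
      ≤ (eLpNorm v 2 volume).toReal * K1 := by
    have h1 := cs (hv.restrict Sᶜ) hg0_mem
    have h2 : (∫ x in Sᶜ, v x * (starRingEnd ℂ) (g0 x)) = ∫ x in Sᶜ, v x * g0 x := by
      apply integral_congr_ae
      refine Eventually.of_forall fun x => ?_
      show v x * (starRingEnd ℂ) (g0 x) = v x * g0 x
      rw [show g0 x = ((x:ℝ):ℂ)⁻¹ from rfl, ← Complex.ofReal_inv, Complex.conj_ofReal]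
    rw [h2] at h1
    refine h1.trans ?_
    rw [K1]
    apply mul_le_mul_of_nonneg_right _ ENNReal.toReal_nonneg
    exact ENNReal.toReal_mono hv.2.ne (eLpNorm_mono_measure _ Measure.restrict_le_self)
  calc ‖∫ x : ℝ, (u x - c * sfn x)‖
      ≤ ‖∫ x in S, (u x - c * sfn x)‖ + ‖∫ x in Sᶜ, (u x - c * sfn x)‖ := by
        rw [hsplit]; exact norm_add_le _ _
    _ ≤ (‖∫ x in S, u x‖ + ‖c‖ * K4) + ((eLpNorm v 2 volume).toReal * K1 + ‖c‖ * K2) := by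
        apply add_le_add
        · rw [hSsplit, K4]
          refine (norm_sub_le _ _).trans ?_
          rw [norm_mul]
        · rw [hTsplit, K2]
          refine (norm_add_le _ _).trans ?_
          rw [norm_mul]
          exact add_le_add_left hTv _
    _ ≤ _ := by
        have := hSu
        nlinarith [norm_nonneg c, ENNReal.toReal_nonneg (a := eLpNorm u 2 volume)]

theorem stmt14 (φ ψ : ℝ → ℂ)
    (hφ : MemLp φ 2 (volume : Measure ℝ)) (hψ : MemLp ψ 2 (volume : Measure ℝ)) :
    (∀ (u : ℝ → ℂ) (c : ℂ), MemLp u 2 (volume : Measure ℝ) →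
      MemLp (fun x : ℝ => (x : ℂ) * u x - c) 2 (volume : Measure ℝ) →
        (Integrable (fun x : ℝ =>
            u x - c * ((Real.sign x : ℝ) : ℂ) * (((Real.sqrt (x ^ 2 + 1) : ℝ) : ℂ))⁻¹)
          (volume : Measure ℝ)) ∧
        ‖c‖ ≤ l2 (fun x : ℝ => ((x : ℂ) * u x - c) + ip u ψ * φ x) + l2 u +
            l2 u * l2 ψ * l2 φ) ∧
    (∃ C : ℝ, 0 < C ∧
      ∀ (u : ℝ → ℂ) (c : ℂ), MemLp u 2 (volume : Measure ℝ) →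
        MemLp (fun x : ℝ => (x : ℂ) * u x - c) 2 (volume : Measure ℝ) →
          ‖Gam1 u c‖ ≤
            C * (l2 (fun x : ℝ => ((x : ℂ) * u x - c) + ip u ψ * φ x) + l2 u)) := by
  have hK1 : 0 ≤ K1 := ENNReal.toReal_nonneg
  have hK2 : 0 ≤ K2 := norm_nonneg _
  have hK3 : 0 ≤ K3 := ENNReal.toReal_nonneg
  have hK4 : 0 ≤ K4 := norm_nonneg _
  have hm1 : 0 ≤ (eLpNorm ψ 2 (volume : Measure ℝ)).toReal := ENNReal.toReal_nonneg
  have hm2 : 0 ≤ (eLpNorm φ 2 (volume : Measure ℝ)).toReal := ENNReal.toReal_nonneg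
  constructor
  · intro u c hu hv
    constructor
    · have heq : (fun x : ℝ =>
            u x - c * ((Real.sign x : ℝ) : ℂ) * (((Real.sqrt (x ^ 2 + 1) : ℝ) : ℂ))⁻¹)
          = fun x : ℝ => u x - c * sfn x := by
        funext x
        rw [show sfn x = ((Real.sign x : ℝ) : ℂ) * (((Real.sqrt (x ^ 2 + 1) : ℝ) : ℂ))⁻¹
          from rfl]
        ring
      rw [heq]
      exact part_i hu hv
    · have hk := cs hu hψ
      have h1 := c_bound hu hv
      have h2 := v_bound (k := ip u ψ) hφ hu hv hk
      simp only [l2]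
      linarith
  · refine ⟨(K1 + K2 + K3 + K4 + 1)
      * ((eLpNorm ψ 2 (volume : Measure ℝ)).toReal
          * (eLpNorm φ 2 (volume : Measure ℝ)).toReal + 1), ?_, ?_⟩
    · have : 0 ≤ (eLpNorm ψ 2 (volume : Measure ℝ)).toReal
          * (eLpNorm φ 2 (volume : Measure ℝ)).toReal := mul_nonneg hm1 hm2
      nlinarith
    · intro u c hu hv
      have hGam : Gam1 u c = ∫ x : ℝ, (u x - c * sfn x) := by
        rw [Gam1]
        congr 1
        funext x
        rw [show sfn x = ((Real.sign x : ℝ) : ℂ) * (((Real.sqrt (x ^ 2 + 1) : ℝ) : ℂ))⁻¹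
          from rfl]
        ring
      have hg := gam_bound hu hv
      have h1 := c_bound hu hv
      have h2 := v_bound (k := ip u ψ) hφ hu hv (cs hu hψ)
      rw [hGam]
      simp only [l2]
      set U := (eLpNorm u 2 (volume : Measure ℝ)).toReal with hU
      set V := (eLpNorm (fun x : ℝ => (x : ℂ) * u x - c) 2 (volume : Measure ℝ)).toReal with hV
      set W := (eLpNorm (fun x : ℝ => ((x : ℂ) * u x - c) + ip u ψ * φ x) 2
        (volume : Measure ℝ)).toReal with hW
      set m1 := (eLpNorm ψ 2 (volume : Measure ℝ)).toReal
      set m2 := (eLpNorm φ 2 (volume : Measure ℝ)).toReal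
      have hUpos : 0 ≤ U := ENNReal.toReal_nonneg
      have hVpos : 0 ≤ V := ENNReal.toReal_nonneg
      have hWpos : 0 ≤ W := ENNReal.toReal_nonneg
      have hc : 0 ≤ ‖c‖ := norm_nonneg _
      nlinarith [mul_le_mul_of_nonneg_left h2 hK1, mul_le_mul_of_nonneg_left h2 hK2,
        mul_le_mul_of_nonneg_left h2 hK4, mul_le_mul_of_nonneg_left h1 hK2,
        mul_le_mul_of_nonneg_left h1 hK4, mul_nonneg (mul_nonneg hm1 hm2) hWpos,
        mul_nonneg (mul_nonneg hm1 hm2) hUpos, mul_nonneg hm1 hm2,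
        mul_nonneg (mul_nonneg hK3 (mul_nonneg hm1 hm2)) hUpos,
        mul_nonneg (mul_nonneg hK3 (mul_nonneg hm1 hm2)) hWpos,
        mul_nonneg hK3 hWpos, mul_nonneg hK1 hUpos, mul_nonneg hK2 hUpos,
        mul_nonneg hK4 hUpos]
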